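/- (Example 8.4, unprovability part) The formula ⊔y⊓x(p(x) → p(y)) is not provable in CL12, where p is a unary nonlogical predicate letter, even though its classical counterpart ∃y∀x(p(x) → p(y)) is a classically valid elementary formula and hence is provable in CL12. -/
import Mathlib


namespace CL12

/-- Terms: variables, constants (named by natural numbers), and applications
of function letters (a function letter is a pair of a name and an arity). -/
inductive Term : Type
  | var : ℕ → Term
  | const : ℕ → Term
  | func : (f : ℕ) → (n : ℕ) → (Fin n → Term) → Term

/-- Replace every occurrence of the variable `x` by the term `t`. -/
def Term.subst (x : ℕ) (t : Term) : Term → Term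
  | .var y => if y = x then t else .var y
  | .const c => .const c
  | .func f n g => .func f n fun i => Term.subst x t (g i)

/-- The set of variables occurring in a term. -/
def Term.vars : Term → Finset ℕ
  | .var y => {y}
  | .const _ => ∅
  | .func _ n g => Finset.univ.biUnion fun i : Fin n => (g i).vars

/-- A classical first-order structure interpreting constants, function letters
and nonlogical predicate letters (identity is interpreted as actual identity). -/
structure Interp where
  U : Type
  hU : Nonempty U
  constI : ℕ → U
  funcI : (f n : ℕ) → (Fin n → U) → U
  predI : (p n : ℕ) → (Fin n → U) → Prop

/-- Evaluation of terms under an interpretation and a valuation. -/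
def Term.eval (I : Interp) (e : ℕ → I.U) : Term → I.U
  | .var y => e y
  | .const c => I.constI c
  | .func f n g => I.funcI f n fun i => (g i).eval I e

/-- Formulas of the language of CL12.  Negation is officially applied to atoms
only, so atoms come in a positive (`pos`, `eq`) and a negative (`neg`, `neq`)
form.  `and`/`or` are the parallel connectives ∧/∨, `cand`/`cor` the choice
connectives ⊓/⊔, `all`/`ex` the blind quantifiers ∀/∃ and `call`/`cex` the
choice quantifiers ⊓x/⊔x. -/
inductive Formula : Type
  | top : Formula
  | bot : Formula
  | pos (p n : ℕ) (args : Fin n → Term) : Formula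
  | neg (p n : ℕ) (args : Fin n → Term) : Formula
  | eq (t₁ t₂ : Term) : Formula
  | neq (t₁ t₂ : Term) : Formula
  | and (A B : Formula) : Formula
  | or (A B : Formula) : Formula
  | cand (A B : Formula) : Formula
  | cor (A B : Formula) : Formula
  | all (x : ℕ) (A : Formula) : Formula
  | ex (x : ℕ) (A : Formula) : Formula
  | call (x : ℕ) (A : Formula) : Formula
  | cex (x : ℕ) (A : Formula) : Formula

/-- Negation of an arbitrary formula, as an abbreviation via the De Morgan
dualities. -/
def Formula.negation : Formula → Formula
  | .top => .bot
  | .bot => .top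
  | .pos p n args => .neg p n args
  | .neg p n args => .pos p n args
  | .eq a b => .neq a b
  | .neq a b => .eq a b
  | .and A B => .or A.negation B.negation
  | .or A B => .and A.negation B.negation
  | .cand A B => .cor A.negation B.negation
  | .cor A B => .cand A.negation B.negation
  | .all x A => .ex x A.negation
  | .ex x A => .all x A.negation
  | .call x A => .cex x A.negation
  | .cex x A => .call x A.negation

/-- `E → F` abbreviates `¬E ∨ F`. -/
def Formula.impl (A B : Formula) : Formula := .or A.negation B

/-- Substitution of the term `t` for all free occurrences of the variable `x`. -/
def Formula.subst (x : ℕ) (t : Term) : Formula → Formula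
  | .top => .top
  | .bot => .bot
  | .pos p n args => .pos p n fun i => Term.subst x t (args i)
  | .neg p n args => .neg p n fun i => Term.subst x t (args i)
  | .eq a b => .eq (Term.subst x t a) (Term.subst x t b)
  | .neq a b => .neq (Term.subst x t a) (Term.subst x t b)
  | .and A B => .and (A.subst x t) (B.subst x t)
  | .or A B => .or (A.subst x t) (B.subst x t)
  | .cand A B => .cand (A.subst x t) (B.subst x t)
  | .cor A B => .cor (A.subst x t) (B.subst x t)
  | .all y A => if y = x then .all y A else .all y (A.subst x t)
  | .ex y A => if y = x then .ex y A else .ex y (A.subst x t)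
  | .call y A => if y = x then .call y A else .call y (A.subst x t)
  | .cex y A => if y = x then .cex y A else .cex y (A.subst x t)

/-- All variables occurring (free or bound) in a formula. -/
def Formula.vars : Formula → Finset ℕ
  | .top => ∅
  | .bot => ∅
  | .pos _ n args => Finset.univ.biUnion fun i : Fin n => (args i).vars
  | .neg _ n args => Finset.univ.biUnion fun i : Fin n => (args i).vars
  | .eq a b => a.vars ∪ b.vars
  | .neq a b => a.vars ∪ b.vars
  | .and A B => A.vars ∪ B.vars
  | .or A B => A.vars ∪ B.vars
  | .cand A B => A.vars ∪ B.vars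
  | .cor A B => A.vars ∪ B.vars
  | .all x A => insert x A.vars
  | .ex x A => insert x A.vars
  | .call x A => insert x A.vars
  | .cex x A => insert x A.vars

/-- Variables having a bound occurrence in a formula. -/
def Formula.boundVars : Formula → Finset ℕ
  | .top => ∅
  | .bot => ∅
  | .pos _ _ _ => ∅
  | .neg _ _ _ => ∅
  | .eq _ _ => ∅
  | .neq _ _ => ∅
  | .and A B => A.boundVars ∪ B.boundVars
  | .or A B => A.boundVars ∪ B.boundVars
  | .cand A B => A.boundVars ∪ B.boundVars
  | .cor A B => A.boundVars ∪ B.boundVars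
  | .all x A => insert x A.boundVars
  | .ex x A => insert x A.boundVars
  | .call x A => insert x A.boundVars
  | .cex x A => insert x A.boundVars

/-- A formula is elementary iff it contains no choice operators. -/
def Formula.IsElementary : Formula → Prop
  | .top => True
  | .bot => True
  | .pos _ _ _ => True
  | .neg _ _ _ => True
  | .eq _ _ => True
  | .neq _ _ => True
  | .and A B => A.IsElementary ∧ B.IsElementary
  | .or A B => A.IsElementary ∧ B.IsElementary
  | .cand _ _ => False
  | .cor _ _ => False
  | .all _ A => A.IsElementary
  | .ex _ A => A.IsElementary
  | .call _ _ => False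
  | .cex _ _ => False

/-- The elementarization ‖F‖ of a formula: all ⊔- and ⊔x-subformulas are
replaced by ⊥, and all ⊓- and ⊓x-subformulas by ⊤. -/
def Formula.elz : Formula → Formula
  | .top => .top
  | .bot => .bot
  | .pos p n args => .pos p n args
  | .neg p n args => .neg p n args
  | .eq a b => .eq a b
  | .neq a b => .neq a b
  | .and A B => .and A.elz B.elz
  | .or A B => .or A.elz B.elz
  | .cand _ _ => .top
  | .cor _ _ => .bot
  | .all x A => .all x A.elz
  | .ex x A => .ex x A.elz
  | .call _ _ => .top
  | .cex _ _ => .bot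

/-- Classical truth of a formula under an interpretation and a valuation
(identity is interpreted as actual identity; the choice operators, which never
occur in the elementary formulas this notion is applied to, are read as their
parallel/blind counterparts). -/
def Formula.truth (I : Interp) : (ℕ → I.U) → Formula → Prop
  | _, .top => True
  | _, .bot => False
  | e, .pos p n args => I.predI p n fun i => (args i).eval I e
  | e, .neg p n args => ¬ I.predI p n fun i => (args i).eval I e
  | e, .eq a b => a.eval I e = b.eval I e
  | e, .neq a b => a.eval I e ≠ b.eval I e
  | e, .and A B => A.truth I e ∧ B.truth I e
  | e, .or A B => A.truth I e ∨ B.truth I e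
  | e, .cand A B => A.truth I e ∧ B.truth I e
  | e, .cor A B => A.truth I e ∨ B.truth I e
  | e, .all x A => ∀ u : I.U, A.truth I (Function.update e x u)
  | e, .ex x A => ∃ u : I.U, A.truth I (Function.update e x u)
  | e, .call x A => ∀ u : I.U, A.truth I (Function.update e x u)
  | e, .cex x A => ∃ u : I.U, A.truth I (Function.update e x u)

/-- Classical validity; by Gödel's completeness theorem this is the same as
provability in classical first-order calculus with constants, function letters
and =, where = is the logical identity predicate. -/
def Valid (F : Formula) : Prop := ∀ (I : Interp) (e : ℕ → I.U), F.truth I e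

/-- The winner of the empty run of the game `F*` on valuation `e`: the
proposition that the empty run is ⊤-won.  Atoms are resolved by truth, the
empty run of `A ⊓ B` and `⊓x A` is ⊤-won, the empty run of `A ⊔ B` and `⊔x A`
is ⊥-won. -/
def Formula.wn0 (I : Interp) : (ℕ → I.U) → Formula → Prop
  | _, .top => True
  | _, .bot => False
  | e, .pos p n args => I.predI p n fun i => (args i).eval I e
  | e, .neg p n args => ¬ I.predI p n fun i => (args i).eval I e
  | e, .eq a b => a.eval I e = b.eval I e
  | e, .neq a b => a.eval I e ≠ b.eval I e
  | e, .and A B => A.wn0 I e ∧ B.wn0 I e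
  | e, .or A B => A.wn0 I e ∨ B.wn0 I e
  | _, .cand _ _ => True
  | _, .cor _ _ => False
  | e, .all x A => ∀ u : I.U, A.wn0 I (Function.update e x u)
  | e, .ex x A => ∃ u : I.U, A.wn0 I (Function.update e x u)
  | _, .call _ _ => True
  | _, .cex _ _ => False

/-- A sequent E₁,…,Eₙ ⊸ F. -/
structure Sequent where
  ant : List Formula
  suc : Formula

/-- The conjunction E₁ ∧ … ∧ Eₙ of a list of formulas (⊤ when the list is empty). -/
def listAnd : List Formula → Formula
  | [] => .top
  | [A] => A
  | A :: l => .and A (listAnd l)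

/-- The elementarization ‖E₁‖∧…∧‖Eₙ‖ → ‖F‖ of a sequent. -/
def Sequent.elz (S : Sequent) : Formula :=
  (listAnd (S.ant.map Formula.elz)).impl S.suc.elz

/-- A sequent is stable iff its elementarization is classically valid
(equivalently, provable in classical first-order calculus with constants,
function letters and =). -/
def Stable (S : Sequent) : Prop := Valid S.elz

/-- All variables occurring in a sequent. -/
def Sequent.vars (S : Sequent) : Finset ℕ :=
  S.ant.foldr (fun A acc => A.vars ∪ acc) S.suc.vars

/-- Variables having a bound occurrence in a sequent. -/
def Sequent.boundVars (S : Sequent) : Finset ℕ :=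
  S.ant.foldr (fun A acc => A.boundVars ∪ acc) S.suc.boundVars

/-- The winner of the empty run of a sequent E₁,…,Eₙ ⊸ F: it is ⊤-won iff the
empty run of some Eᵢ is ⊥-won or the empty run of F is ⊤-won. -/
def Sequent.wn0 (S : Sequent) (I : Interp) (e : ℕ → I.U) : Prop :=
  (∃ E ∈ S.ant, ¬ E.wn0 I e) ∨ S.suc.wn0 I e

/-- A context: a formula with a single hole which is a surface position, i.e.,
not in the scope of any choice operator.  `C.fill H` is the formula `F[H]`
having the indicated surface occurrence of `H`. -/
inductive Ctx : Type
  | hole : Ctx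
  | andL (C : Ctx) (B : Formula) : Ctx
  | andR (A : Formula) (C : Ctx) : Ctx
  | orL (C : Ctx) (B : Formula) : Ctx
  | orR (A : Formula) (C : Ctx) : Ctx
  | all (x : ℕ) (C : Ctx) : Ctx
  | ex (x : ℕ) (C : Ctx) : Ctx

/-- Filling the hole of a context with a formula. -/
def Ctx.fill : Ctx → Formula → Formula
  | .hole, H => H
  | .andL C B, H => .and (C.fill H) B
  | .andR A C, H => .and A (C.fill H)
  | .orL C B, H => .or (C.fill H) B
  | .orR A C, H => .or A (C.fill H)
  | .all x C, H => .all x (C.fill H)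
  | .ex x C, H => .ex x (C.fill H)

/-- The hole of the context is not in the scope of ∧. -/
def Ctx.noAnd : Ctx → Prop
  | .hole => True
  | .andL _ _ => False
  | .andR _ _ => False
  | .orL C _ => C.noAnd
  | .orR _ C => C.noAnd
  | .all _ C => C.noAnd
  | .ex _ C => C.noAnd

/-- The hole of the context is not in the scope of ∨. -/
def Ctx.noOr : Ctx → Prop
  | .hole => True
  | .andL C _ => C.noOr
  | .andR _ C => C.noOr
  | .orL _ _ => False
  | .orR _ _ => False
  | .all _ C => C.noOr
  | .ex _ C => C.noOr

/-- In the ⊔x-Choose and ⊓x-Choose rules, the term chosen for `x` must be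
either a constant, or a variable with no bound occurrences in the premise. -/
def GoodTerm (t : Term) (premise : Sequent) : Prop :=
  (∃ c, t = Term.const c) ∨ (∃ y, t = Term.var y ∧ y ∉ premise.boundVars)

/-- CL12-provability, defined by the six rules ⊔-Choose, ⊓-Choose, ⊔x-Choose,
⊓x-Choose, Replicate and Wait.  In the Wait rule, the predicate `P` carves out
the set of premises Y₁,…,Yₙ of the rule, all of which are required to be
provable. -/
inductive Provable : Sequent → Prop
  | corChoose (Γ : List Formula) (C : Ctx) (H0 H1 : Formula) (i : Bool) :
      Provable ⟨Γ, C.fill (bif i then H1 else H0)⟩ →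
      Provable ⟨Γ, C.fill (.cor H0 H1)⟩
  | candChoose (Γ Δ : List Formula) (C : Ctx) (H0 H1 F : Formula) (i : Bool) :
      Provable ⟨Γ ++ C.fill (bif i then H1 else H0) :: Δ, F⟩ →
      Provable ⟨Γ ++ C.fill (.cand H0 H1) :: Δ, F⟩
  | cexChoose (Γ : List Formula) (C : Ctx) (x : ℕ) (H : Formula) (t : Term) :
      GoodTerm t ⟨Γ, C.fill (H.subst x t)⟩ →
      Provable ⟨Γ, C.fill (H.subst x t)⟩ →
      Provable ⟨Γ, C.fill (.cex x H)⟩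
  | callChoose (Γ Δ : List Formula) (C : Ctx) (x : ℕ) (H F : Formula) (t : Term) :
      GoodTerm t ⟨Γ ++ C.fill (H.subst x t) :: Δ, F⟩ →
      Provable ⟨Γ ++ C.fill (H.subst x t) :: Δ, F⟩ →
      Provable ⟨Γ ++ C.fill (.call x H) :: Δ, F⟩
  | replicate (Γ Δ : List Formula) (E F : Formula) :
      Provable ⟨Γ ++ E :: Δ ++ [E], F⟩ →
      Provable ⟨Γ ++ E :: Δ, F⟩
  | wait (X : Sequent) (P : Sequent → Prop)
      (hstable : Stable X)
      (hcand : ∀ (C : Ctx) (H0 H1 : Formula), X.suc = C.fill (.cand H0 H1) →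
          P ⟨X.ant, C.fill H0⟩ ∧ P ⟨X.ant, C.fill H1⟩)
      (hcor : ∀ (Γ Δ : List Formula) (C : Ctx) (H0 H1 : Formula),
          X.ant = Γ ++ C.fill (.cor H0 H1) :: Δ →
          P ⟨Γ ++ C.fill H0 :: Δ, X.suc⟩ ∧ P ⟨Γ ++ C.fill H1 :: Δ, X.suc⟩)
      (hcall : ∀ (C : Ctx) (x : ℕ) (H : Formula), X.suc = C.fill (.call x H) →
          ∃ y, y ∉ X.vars ∧ P ⟨X.ant, C.fill (H.subst x (.var y))⟩)
      (hcex : ∀ (Γ Δ : List Formula) (C : Ctx) (x : ℕ) (H : Formula),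
          X.ant = Γ ++ C.fill (.cex x H) :: Δ →
          ∃ y, y ∉ X.vars ∧ P ⟨Γ ++ C.fill (H.subst x (.var y)) :: Δ, X.suc⟩)
      (hprov : ∀ Y, P Y → Provable Y) :
      Provable X


/-- Filling a context preserves elementarity downwards. -/
lemma fill_elem : ∀ (C : Ctx) (G : Formula), (C.fill G).IsElementary → G.IsElementary
  | .hole, _, h => h
  | .andL C _, G, h => fill_elem C G h.1
  | .andR _ C, G, h => fill_elem C G h.2
  | .orL C _, G, h => fill_elem C G h.1
  | .orR _ C, G, h => fill_elem C G h.2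
  | .all _ C, G, h => fill_elem C G h
  | .ex _ C, G, h => fill_elem C G h

/-- A trivial interpretation. -/
def I0 : Interp := ⟨PUnit, ⟨⟨⟩⟩, fun _ => ⟨⟩, fun _ _ _ => ⟨⟩, fun _ _ _ => True⟩

/-- Counterexample interpretation: Booleans, all constants/functions false,
p(args) iff all args are true. -/
def I1 : Interp := ⟨Bool, ⟨false⟩, fun _ => false, fun _ _ _ => false,
  fun _ _ args => ∀ i, args i = true⟩

/-- Step 3: the elementary sequent ⊸ ¬p(a) ∨ p(b) is unprovable whenever some
interpretation makes p(a) true and p(b) false. -/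
lemma lemA (u v : Fin 1 → Term)
    (hctr : ∃ (I : Interp) (e : ℕ → I.U),
      (I.predI 0 1 fun i => (u i).eval I e) ∧ ¬ (I.predI 0 1 fun i => (v i).eval I e)) :
    ¬ Provable ⟨[], .or (.neg 0 1 u) (.pos 0 1 v)⟩ := by
  intro h
  have helem : (Formula.or (.neg 0 1 u) (.pos 0 1 v)).IsElementary := ⟨trivial, trivial⟩
  generalize hS : (⟨[], .or (.neg 0 1 u) (.pos 0 1 v)⟩ : Sequent) = S at h
  cases h with
  | corChoose Γ C H0 H1 i hp =>
      obtain ⟨h1, h2⟩ := Sequent.mk.injEq .. ▸ hS.symm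
      exact fill_elem C _ (h2 ▸ helem)
  | candChoose Γ Δ C H0 H1 F i hp =>
      obtain ⟨h1, h2⟩ := Sequent.mk.injEq .. ▸ hS.symm
      simp at h1
  | cexChoose Γ C x H t hgood hp =>
      obtain ⟨h1, h2⟩ := Sequent.mk.injEq .. ▸ hS.symm
      exact fill_elem C _ (h2 ▸ helem)
  | callChoose Γ Δ C x H F t hgood hp =>
      obtain ⟨h1, h2⟩ := Sequent.mk.injEq .. ▸ hS.symm
      simp at h1
  | replicate Γ Δ E F hp =>
      obtain ⟨h1, h2⟩ := Sequent.mk.injEq .. ▸ hS.symm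
      simp at h1
  | wait X P hstable hcand hcor hcall hcex hprov =>
      subst hS
      obtain ⟨I, e, h1, h2⟩ := hctr
      have := hstable I e
      simp only [Stable, Valid, Sequent.elz, List.map, listAnd, Formula.impl,
        Formula.negation, Formula.elz, Formula.truth] at this
      tauto

/-- Step 2: the sequent ⊸ ⊓x(¬p(x) ∨ p(b)) is unprovable for b a constant or
a variable other than x. -/
lemma lemB (b : Term) (hb : (∃ c, b = Term.const c) ∨ ∃ z, b = Term.var z ∧ z ≠ 0) :
    ¬ Provable ⟨[], .call 0 (.or (.neg 0 1 ![Term.var 0]) (.pos 0 1 ![b]))⟩ := by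
  intro h
  generalize hS : (⟨[], .call 0 (.or (.neg 0 1 ![Term.var 0]) (.pos 0 1 ![b]))⟩ : Sequent)
      = S at h
  cases h with
  | corChoose Γ C H0 H1 i hp =>
      obtain ⟨h1, h2⟩ := Sequent.mk.injEq .. ▸ hS.symm
      cases C <;> simp [Ctx.fill] at h2
  | candChoose Γ Δ C H0 H1 F i hp =>
      obtain ⟨h1, h2⟩ := Sequent.mk.injEq .. ▸ hS.symm; simp at h1
  | cexChoose Γ C x H t hgood hp =>
      obtain ⟨h1, h2⟩ := Sequent.mk.injEq .. ▸ hS.symm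
      cases C <;> simp [Ctx.fill] at h2
  | callChoose Γ Δ C x H F t hgood hp =>
      obtain ⟨h1, h2⟩ := Sequent.mk.injEq .. ▸ hS.symm; simp at h1
  | replicate Γ Δ E F hp =>
      obtain ⟨h1, h2⟩ := Sequent.mk.injEq .. ▸ hS.symm; simp at h1
  | wait X P hstable hcand hcor hcall hcex hprov =>
      subst hS
      obtain ⟨y, hy, hP⟩ := hcall Ctx.hole 0
        (.or (.neg 0 1 ![Term.var 0]) (.pos 0 1 ![b])) rfl
      have hprov' := hprov _ hP
      simp only [Ctx.fill, Formula.subst] at hprov'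
      have hu : (fun i => Term.subst 0 (Term.var y) (![Term.var 0] i)) = ![Term.var y] := by
        funext i; fin_cases i; simp [Term.subst]
      have hv : (fun i => Term.subst 0 (Term.var y) (![b] i))
          = ![Term.subst 0 (Term.var y) b] := by
        funext i; fin_cases i; rfl
      rw [hu, hv] at hprov'
      refine lemA _ _ ?_ hprov'
      refine ⟨I1, fun v => decide (v = y), ?_, ?_⟩
      · intro i
        fin_cases i
        simp [Term.eval, I1]
      · intro hpred
        have h00 := hpred 0
        simp only [Matrix.cons_val_zero] at h00
        rcases hb with ⟨c, rfl⟩ | ⟨z, rfl, hz⟩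
        · simp [Term.subst, Term.eval, I1] at h00
        · have hzy : z ≠ y := by
            intro hzy
            apply hy
            subst hzy
            simp only [Sequent.vars, List.foldr, Formula.vars, Term.vars]
            simp [Term.vars]
          simp [Term.subst, Term.eval, I1, hz] at h00
          exact hzy h00

/-- Step 1: ⊸ ⊔y⊓x(¬p(x) ∨ p(y)) is unprovable. -/
lemma lemC :
    ¬ Provable ⟨[], .cex 1 (.call 0 (.or (.neg 0 1 ![Term.var 0]) (.pos 0 1 ![Term.var 1])))⟩ := by
  intro h
  generalize hS :
      (⟨[], .cex 1 (.call 0 (.or (.neg 0 1 ![Term.var 0]) (.pos 0 1 ![Term.var 1])))⟩ : Sequent)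
      = S at h
  cases h with
  | corChoose Γ C H0 H1 i hp =>
      obtain ⟨h1, h2⟩ := Sequent.mk.injEq .. ▸ hS.symm
      cases C <;> simp [Ctx.fill] at h2
  | candChoose Γ Δ C H0 H1 F i hp =>
      obtain ⟨h1, h2⟩ := Sequent.mk.injEq .. ▸ hS.symm; simp at h1
  | cexChoose Γ C x H t hgood hp =>
      obtain ⟨h1, h2⟩ := Sequent.mk.injEq .. ▸ hS.symm
      cases C <;> simp [Ctx.fill] at h2
      obtain ⟨hx, hH⟩ := h2
      subst hx hH h1
      have hsub : (Formula.call 0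
            ((Formula.neg 0 1 ![Term.var 0]).or (Formula.pos 0 1 ![Term.var 1]))).subst 1 t
          = Formula.call 0 ((Formula.neg 0 1 ![Term.var 0]).or (Formula.pos 0 1 ![t])) := by
        simp only [Formula.subst]
        norm_num
        constructor <;> (funext i; fin_cases i; simp [Term.subst])
      simp only [Ctx.fill, hsub] at hp hgood
      refine lemB t ?_ hp
      rcases hgood with ⟨c, rfl⟩ | ⟨z, rfl, hz⟩
      · exact Or.inl ⟨c, rfl⟩
      · refine Or.inr ⟨z, rfl, ?_⟩
        intro hz0
        apply hz
        subst hz0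
        simp [Sequent.boundVars, Formula.boundVars]
  | callChoose Γ Δ C x H F t hgood hp =>
      obtain ⟨h1, h2⟩ := Sequent.mk.injEq .. ▸ hS.symm; simp at h1
  | replicate Γ Δ E F hp =>
      obtain ⟨h1, h2⟩ := Sequent.mk.injEq .. ▸ hS.symm; simp at h1
  | wait X P hstable hcand hcor hcall hcex hprov =>
      subst hS
      have := hstable I0 (fun _ => ⟨⟩)
      simp [Stable, Valid, Sequent.elz, listAnd, Formula.impl, Formula.negation,
        Formula.elz, Formula.truth] at this

/-- The classical counterpart is valid. -/
lemma valid2 :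
    Valid (.ex 1 (.all 0
      (Formula.impl (.pos 0 1 ![Term.var 0]) (.pos 0 1 ![Term.var 1])))) := by
  intro I e
  simp only [Formula.impl, Formula.negation, Formula.truth, Term.eval,
    Matrix.cons_val_fin_one, Function.update]
  by_cases hp : ∃ u : I.U, I.predI 0 1 fun _ => u
  · obtain ⟨u, hu⟩ := hp
    exact ⟨u, fun v => Or.inr (by simpa using hu)⟩
  · obtain ⟨u⟩ := I.hU
    refine ⟨u, fun v => Or.inl fun hc => hp ⟨v, by simpa using hc⟩⟩

/-- Example 8.4, unprovability part: ⊔y⊓x(p(x) → p(y)) is not provable in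
CL12, even though its classical counterpart ∃y∀x(p(x) → p(y)) is a classically
valid elementary formula and hence is provable in CL12. -/
theorem example_8_4_unprovable :
    (¬ Provable ⟨[],
        .cex 1 (.call 0
          (Formula.impl (.pos 0 1 ![Term.var 0]) (.pos 0 1 ![Term.var 1])))⟩) ∧
    Valid (.ex 1 (.all 0
      (Formula.impl (.pos 0 1 ![Term.var 0]) (.pos 0 1 ![Term.var 1])))) ∧
    Provable ⟨[],
      .ex 1 (.all 0
        (Formula.impl (.pos 0 1 ![Term.var 0]) (.pos 0 1 ![Term.var 1])))⟩ := by
  have helem : (Formula.ex 1 (.all 0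
      (Formula.impl (.pos 0 1 ![Term.var 0]) (.pos 0 1 ![Term.var 1])))).IsElementary :=
    ⟨trivial, trivial⟩
  refine ⟨lemC, valid2, ?_⟩
  refine Provable.wait _ (fun _ => False) ?_ ?_ ?_ ?_ ?_ (fun Y h => h.elim)
  · intro I e
    exact Or.inr (valid2 I e)
  · intro C H0 H1 h
    have h2 : Formula.ex 1 (.all 0
        (Formula.impl (.pos 0 1 ![Term.var 0]) (.pos 0 1 ![Term.var 1])))
        = C.fill (.cand H0 H1) := h
    exact False.elim (fill_elem C (.cand H0 H1) (h2 ▸ helem))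
  · intro Γ Δ C H0 H1 h
    simp at h
  · intro C x H h
    have h2 : Formula.ex 1 (.all 0
        (Formula.impl (.pos 0 1 ![Term.var 0]) (.pos 0 1 ![Term.var 1])))
        = C.fill (.call x H) := h
    exact False.elim (fill_elem C (.call x H) (h2 ▸ helem))
  · intro Γ Δ C x H h
    simp at h

end CL12
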